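/- Let (E1,q1), (E2,q2), (E3,q3) be metric groups, let L be a Lagrangian subgroup of (E1 ⊕ E2, q1⁻¹ ⊕ q2) and let M be a Lagrangian subgroup of (E2 ⊕ E3, q2⁻¹ ⊕ q3). Then |M∘L| · |E2| = |M| · |L|, where M∘L := {(a1,a3) ∈ E1 ⊕ E3 : ∃ a2 ∈ E2, (a1,a2) ∈ L and (a2,a3) ∈ M}. -/

import Mathlib

/-- The symmetric bicharacter associated to a quadratic form `q` with values in `ℂˣ`. -/
def bq {M : Type*} [AddCommGroup M] (q : M → ℂˣ) (x y : M) : ℂˣ :=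
  q (x + y) * (q x)⁻¹ * (q y)⁻¹

/-- `(M, q)` is a metric group: `q` is even, `b_q` is biadditive and nondegenerate. -/
def IsMetric {M : Type*} [AddCommGroup M] (q : M → ℂˣ) : Prop :=
  (∀ x, q (-x) = q x) ∧
  (∀ x y z, bq q (x + y) z = bq q x z * bq q y z) ∧
  (∀ x y z, bq q x (y + z) = bq q x y * bq q x z) ∧
  (∀ x, (∀ y, bq q x y = 1) → x = 0)

/-- A subgroup `L` is Lagrangian for `q` if `q = 1` on `L` and `|L|² = |M|`. -/
def IsLagrangian {M : Type*} [AddCommGroup M] (q : M → ℂˣ) (L : AddSubgroup M) : Prop :=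
  (∀ x ∈ L, q x = 1) ∧ Nat.card L ^ 2 = Nat.card M

/-- Composition of Lagrangian correspondences (as a set). -/
def compL {E1 E2 E3 : Type*} [AddCommGroup E1] [AddCommGroup E2] [AddCommGroup E3]
    (L : AddSubgroup (E1 × E2)) (M : AddSubgroup (E2 × E3)) : Set (E1 × E3) :=
  {p | ∃ a2 : E2, (p.1, a2) ∈ L ∧ (a2, p.2) ∈ M}

section CharSum

lemma sum_hom_eq_zero {A : Type*} [AddCommGroup A] [Fintype A] (f : A → ℂ)
    (hf : ∀ x y, f (x + y) = f x * f y) (a : A) (ha : f a ≠ 1) :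
    ∑ x, f x = 0 := by
  have h : f a * ∑ x, f x = ∑ x, f x := by
    rw [Finset.mul_sum]
    calc ∑ x, f a * f x = ∑ x, f (a + x) := by
          exact Finset.sum_congr rfl fun x _ => (hf a x).symm
      _ = ∑ x, f x :=
          Fintype.sum_equiv (Equiv.addLeft a) _ _ (fun x => rfl)
  have h2 : (f a - 1) * ∑ x, f x = 0 := by
    rw [sub_mul, one_mul, h, sub_self]
  rcases mul_eq_zero.mp h2 with h3 | h3
  · exact absurd (sub_eq_zero.mp h3) ha
  · exact h3

lemma b_zero_left {A : Type*} [AddCommGroup A] (b : A → A → ℂˣ)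
    (hl : ∀ x y z, b (x + y) z = b x z * b y z) (z : A) : b 0 z = 1 := by
  have h := hl 0 0 z
  rw [add_zero] at h
  exact right_eq_mul.mp h

lemma b_zero_right {A : Type*} [AddCommGroup A] (b : A → A → ℂˣ)
    (hr : ∀ x y z, b x (y + z) = b x y * b x z) (z : A) : b z 0 = 1 := by
  have h := hr z 0 0
  rw [add_zero] at h
  exact right_eq_mul.mp h

lemma b_neg_left {A : Type*} [AddCommGroup A] (b : A → A → ℂˣ)
    (hl : ∀ x y z, b (x + y) z = b x z * b y z) (x z : A) : b (-x) z = (b x z)⁻¹ := by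
  have h := hl x (-x) z
  rw [add_neg_cancel, b_zero_left b hl] at h
  exact (eq_inv_of_mul_eq_one_right h.symm)

lemma perp_card {E : Type*} [AddCommGroup E] [Fintype E] (b : E → E → ℂˣ)
    (hl : ∀ x y z, b (x + y) z = b x z * b y z)
    (hr : ∀ x y z, b x (y + z) = b x y * b x z)
    (hs : ∀ x y, b x y = b y x)
    (hnd : ∀ x, (∀ y, b x y = 1) → x = 0)
    (H P : AddSubgroup E)
    (hP : ∀ x, x ∈ P ↔ ∀ h ∈ H, b x h = 1) :
    Nat.card P * Nat.card H = Nat.card E := by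
  classical
  letI : Fintype H := Fintype.ofFinite H
  have key : ∀ x : E, ∑ h : H, ((b x (h : E) : ℂˣ) : ℂ)
      = if x ∈ P then (Nat.card H : ℂ) else 0 := by
    intro x
    by_cases hx : x ∈ P
    · rw [if_pos hx]
      have : ∀ h : H, ((b x (h : E) : ℂˣ) : ℂ) = 1 := fun h => by
        rw [(hP x).mp hx h h.2, Units.val_one]
      rw [Finset.sum_congr rfl fun h _ => this h, Finset.sum_const, Nat.card_eq_fintype_card]
      simp
    · rw [if_neg hx]
      rw [hP x] at hx
      push_neg at hx
      obtain ⟨h0, h0H, hb⟩ := hx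
      refine sum_hom_eq_zero (fun h : H => ((b x (h : E) : ℂˣ) : ℂ)) ?_ ⟨h0, h0H⟩ ?_
      · intro u v
        have := hr x (u : E) (v : E)
        simp only [AddSubgroup.coe_add, this, Units.val_mul]
      · simp only
        rw [Ne, Units.val_eq_one]
        exact hb
  have key2 : ∀ h : H, ∑ x : E, ((b x (h : E) : ℂˣ) : ℂ)
      = if (h : E) = 0 then (Fintype.card E : ℂ) else 0 := by
    intro h
    by_cases h0 : (h : E) = 0
    · rw [if_pos h0]
      have : ∀ x : E, ((b x (h : E) : ℂˣ) : ℂ) = 1 := fun x => by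
        rw [h0, b_zero_right b hr, Units.val_one]
      rw [Finset.sum_congr rfl fun x _ => this x, Finset.sum_const]
      simp
    · rw [if_neg h0]
      have : ∃ y, b (h : E) y ≠ 1 := by
        by_contra hc
        push_neg at hc
        exact h0 (hnd _ hc)
      obtain ⟨y, hy⟩ := this
      refine sum_hom_eq_zero (fun x : E => ((b x (h : E) : ℂˣ) : ℂ)) ?_ y ?_
      · intro u v
        simp only [hl u v (h : E), Units.val_mul]
      · show ((b y (h : E) : ℂˣ) : ℂ) ≠ 1
        rw [Ne, Units.val_eq_one, hs]
        exact hy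
  have S1 : ∑ x : E, ∑ h : H, ((b x (h : E) : ℂˣ) : ℂ)
      = (Nat.card P : ℂ) * (Nat.card H : ℂ) := by
    rw [Finset.sum_congr rfl fun x _ => key x, ← Finset.sum_filter, Finset.sum_const,
      nsmul_eq_mul]
    congr 1
    rw [Nat.card_eq_fintype_card]
    norm_cast
    exact (Fintype.card_subtype (· ∈ P)).symm
  have S2 : ∑ x : E, ∑ h : H, ((b x (h : E) : ℂˣ) : ℂ) = (Fintype.card E : ℂ) := by
    rw [Finset.sum_comm, Finset.sum_congr rfl fun h _ => key2 h]
    have : ∀ h : H, ((h : E) = 0) = (h = (0 : H)) := by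
      intro h
      simp [ZeroMemClass.coe_eq_zero]
    rw [Finset.sum_congr rfl fun h _ => by rw [this h]]
    exact (Finset.sum_eq_single (0 : H) (fun b _ hb => if_neg hb) (by simp)).trans (if_pos rfl)
  have := S1.symm.trans S2
  rw [← Nat.cast_mul, ← Nat.card_eq_fintype_card] at this
  exact_mod_cast this

end CharSum


lemma bq_symm {A : Type*} [AddCommGroup A] (q : A → ℂˣ) (x y : A) :
    bq q x y = bq q y x := by
  unfold bq
  rw [add_comm y x, mul_right_comm]

lemma bq_isotropic {A : Type*} [AddCommGroup A] (q : A → ℂˣ) (x y : A)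
    (hx : q x = 1) (hy : q y = 1) (hxy : q (x + y) = 1) : bq q x y = 1 := by
  rw [bq, hx, hy, hxy]; simp

lemma bq_prod {A B : Type*} [AddCommGroup A] [AddCommGroup B] (qa : A → ℂˣ) (qb : B → ℂˣ)
    (x y : A × B) :
    bq (fun p : A × B => (qa p.1)⁻¹ * qb p.2) x y = (bq qa x.1 y.1)⁻¹ * bq qb x.2 y.2 := by
  simp only [bq, Prod.fst_add, Prod.snd_add, mul_inv, inv_inv]
  simp only [mul_comm, mul_assoc, mul_left_comm]

lemma isMetric_prod {A B : Type*} [AddCommGroup A] [AddCommGroup B]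
    (qa : A → ℂˣ) (qb : B → ℂˣ) (ha : IsMetric qa) (hb : IsMetric qb) :
    IsMetric (fun p : A × B => (qa p.1)⁻¹ * qb p.2) := by
  obtain ⟨hae, hal, har, hand⟩ := ha
  obtain ⟨hbe, hbl, hbr, hbnd⟩ := hb
  refine ⟨?_, ?_, ?_, ?_⟩
  · intro x
    simp only [Prod.fst_neg, Prod.snd_neg, hae, hbe]
  · intro x y z
    simp only [bq_prod, Prod.fst_add, Prod.snd_add, hal, hbl, mul_inv]
    simp only [mul_comm, mul_assoc, mul_left_comm]
  · intro x y z
    simp only [bq_prod, Prod.fst_add, Prod.snd_add, har, hbr, mul_inv]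
    simp only [mul_comm, mul_assoc, mul_left_comm]
  · intro x hx
    have hx1 : x.1 = 0 := by
      apply hand
      intro c
      have := hx (c, 0)
      rw [bq_prod] at this
      have h0 : bq qb x.2 0 = 1 := by
        have h := hbr x.2 0 0
        rw [add_zero] at h
        exact right_eq_mul.mp h
      rw [h0, mul_one, inv_eq_one] at this
      exact this
    have hx2 : x.2 = 0 := by
      apply hbnd
      intro d
      have := hx (0, d)
      rw [bq_prod] at this
      have h0 : bq qa x.1 0 = 1 := by
        have h := har x.1 0 0
        rw [add_zero] at h
        exact right_eq_mul.mp h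
      rw [h0, inv_one, one_mul] at this
      exact this
    exact Prod.ext hx1 hx2

lemma lagr_mem_of_perp {F : Type*} [AddCommGroup F] [Fintype F] (Q : F → ℂˣ)
    (hQ : IsMetric Q) (L : AddSubgroup F)
    (hiso : ∀ x ∈ L, Q x = 1) (hcard : Nat.card L ^ 2 = Nat.card F)
    (z : F) (hz : ∀ l ∈ L, bq Q z l = 1) : z ∈ L := by
  obtain ⟨-, hl, hr, hnd⟩ := hQ
  set P : AddSubgroup F :=
    { carrier := {w | ∀ l ∈ L, bq Q w l = 1}
      zero_mem' := fun l _ => b_zero_left (bq Q) hl l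
      add_mem' := by
        intro u v hu hv l hlL
        rw [hl u v l, hu l hlL, hv l hlL, one_mul]
      neg_mem' := by
        intro u hu l hlL
        rw [b_neg_left (bq Q) hl, hu l hlL, inv_one] } with hPdef
  have hsub : L ≤ P := by
    intro x hx y hy
    exact bq_isotropic Q x y (hiso x hx) (hiso y hy) (hiso _ (add_mem hx hy))
  have hPcard : Nat.card P * Nat.card L = Nat.card F :=
    perp_card (bq Q) hl hr (bq_symm Q) hnd L P (fun x => Iff.rfl)
  have hLpos : 0 < Nat.card L := Nat.card_pos
  have hPL : Nat.card P = Nat.card L := by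
    have : Nat.card P * Nat.card L = Nat.card L * Nat.card L := by
      rw [hPcard, ← hcard]; ring
    exact Nat.eq_of_mul_eq_mul_right hLpos this
  have : L = P := AddSubgroup.eq_of_le_of_card_ge hsub (le_of_eq hPL)
  rw [this]
  exact hz

lemma card_range_mul_card_ker {G H : Type*} [AddGroup G] [AddGroup H] (f : G →+ H) :
    Nat.card G = Nat.card f.range * Nat.card f.ker := by
  rw [AddSubgroup.card_eq_card_quotient_mul_card_addSubgroup f.ker]
  congr 1
  exact Nat.card_congr (QuotientAddGroup.quotientKerEquivRange f).toEquiv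


/-- For Lagrangian correspondences `L ≤ E1 ⊕ E2` and `M ≤ E2 ⊕ E3`,
`|M∘L| · |E2| = |M| · |L|`. -/
theorem stmt8 {E1 E2 E3 : Type*} [AddCommGroup E1] [Fintype E1]
    [AddCommGroup E2] [Fintype E2] [AddCommGroup E3] [Fintype E3]
    (q1 : E1 → ℂˣ) (q2 : E2 → ℂˣ) (q3 : E3 → ℂˣ)
    (h1 : IsMetric q1) (h2 : IsMetric q2) (h3 : IsMetric q3)
    (L : AddSubgroup (E1 × E2)) (M : AddSubgroup (E2 × E3))
    (hL : IsLagrangian (fun p : E1 × E2 => (q1 p.1)⁻¹ * q2 p.2) L)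
    (hM : IsLagrangian (fun p : E2 × E3 => (q2 p.1)⁻¹ * q3 p.2) M) :
    Nat.card (compL L M) * Nat.card E2 = Nat.card M * Nat.card L := by
  classical
  have hQ1 : IsMetric (fun p : E1 × E2 => (q1 p.1)⁻¹ * q2 p.2) := isMetric_prod q1 q2 h1 h2
  have hQ2 : IsMetric (fun p : E2 × E3 => (q2 p.1)⁻¹ * q3 p.2) := isMetric_prod q2 q3 h2 h3
  obtain ⟨hLiso, hLcard⟩ := hL
  obtain ⟨hMiso, hMcard⟩ := hM
  set L₂ : AddSubgroup E2 := L.map (AddMonoidHom.snd E1 E2) with hL₂def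
  set M₂ : AddSubgroup E2 := M.map (AddMonoidHom.fst E2 E3) with hM₂def
  set Hh : AddSubgroup E2 := L₂ ⊔ M₂ with hHdef
  set L0 : AddSubgroup E2 := L.comap (AddMonoidHom.inr E1 E2) with hL0def
  set M0 : AddSubgroup E2 := M.comap (AddMonoidHom.inl E2 E3) with hM0def
  set P : AddSubgroup E2 := L0 ⊓ M0 with hPdef
  have hL0iff : ∀ x : E2, x ∈ L0 ↔ ((0 : E1), x) ∈ L := by
    intro x
    rw [hL0def, AddSubgroup.mem_comap, AddMonoidHom.inr_apply]
  have hM0iff : ∀ x : E2, x ∈ M0 ↔ (x, (0 : E3)) ∈ M := by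
    intro x
    rw [hM0def, AddSubgroup.mem_comap, AddMonoidHom.inl_apply]
  have hL0mem : ∀ x : E2, x ∈ L0 ↔ ∀ h ∈ L₂, bq q2 x h = 1 := by
    intro x
    rw [hL0iff]
    constructor
    · intro hx h hh
      obtain ⟨l, hlL, rfl⟩ := AddSubgroup.mem_map.mp hh
      have hiso' : bq (fun p : E1 × E2 => (q1 p.1)⁻¹ * q2 p.2) ((0 : E1), x) l = 1 :=
        bq_isotropic _ _ _ (hLiso _ hx) (hLiso _ hlL) (hLiso _ (add_mem hx hlL))
      rw [bq_prod] at hiso'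
      rw [b_zero_left (bq q1) h1.2.1 l.1, inv_one, one_mul] at hiso'
      exact hiso'
    · intro hx
      apply lagr_mem_of_perp _ hQ1 L hLiso hLcard
      intro l hlL
      rw [bq_prod, b_zero_left (bq q1) h1.2.1 l.1, inv_one, one_mul]
      exact hx l.2 ⟨l, hlL, rfl⟩
  have hM0mem : ∀ x : E2, x ∈ M0 ↔ ∀ h ∈ M₂, bq q2 x h = 1 := by
    intro x
    rw [hM0iff]
    constructor
    · intro hx h hh
      obtain ⟨m, hmM, rfl⟩ := AddSubgroup.mem_map.mp hh
      have hiso' : bq (fun p : E2 × E3 => (q2 p.1)⁻¹ * q3 p.2) (x, (0 : E3)) m = 1 :=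
        bq_isotropic _ _ _ (hMiso _ hx) (hMiso _ hmM) (hMiso _ (add_mem hx hmM))
      rw [bq_prod, b_zero_left (bq q3) h3.2.1 m.2, mul_one, inv_eq_one] at hiso'
      exact hiso'
    · intro hx
      apply lagr_mem_of_perp _ hQ2 M hMiso hMcard
      intro m hmM
      rw [bq_prod, b_zero_left (bq q3) h3.2.1 m.2, mul_one, inv_eq_one]
      exact hx m.1 ⟨m, hmM, rfl⟩
  have hPmem : ∀ x : E2, x ∈ P ↔ ∀ h ∈ Hh, bq q2 x h = 1 := by
    intro x
    rw [hPdef, AddSubgroup.mem_inf]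
    constructor
    · rintro ⟨hx1, hx2⟩ h hh
      obtain ⟨a, ha, b, hb, rfl⟩ := AddSubgroup.mem_sup.mp hh
      rw [h2.2.2.1 x a b, (hL0mem x).mp hx1 a ha, (hM0mem x).mp hx2 b hb, one_mul]
    · intro hx
      exact ⟨(hL0mem x).mpr (fun h hh => hx h (AddSubgroup.mem_sup_left hh)),
             (hM0mem x).mpr (fun h hh => hx h (AddSubgroup.mem_sup_right hh))⟩
  have e3 : Nat.card P * Nat.card Hh = Nat.card E2 :=
    perp_card (bq q2) h2.2.1 h2.2.2.1 (bq_symm q2) h2.2.2.2 Hh P hPmem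
  -- the correspondence subgroup K
  set f : E1 × E2 × E3 →+ (E1 × E2) × (E2 × E3) :=
    AddMonoidHom.mk' (fun x => ((x.1, x.2.1), (x.2.1, x.2.2))) (fun a b => rfl) with hfdef
  set g : E1 × E2 × E3 →+ E1 × E3 :=
    AddMonoidHom.mk' (fun x => (x.1, x.2.2)) (fun a b => rfl) with hgdef
  set K : AddSubgroup (E1 × E2 × E3) := (L.prod M).comap f with hKdef
  have hKmem : ∀ x : E1 × E2 × E3, x ∈ K ↔ (x.1, x.2.1) ∈ L ∧ (x.2.1, x.2.2) ∈ M := by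
    intro x
    rw [hKdef, AddSubgroup.mem_comap, hfdef]
    exact AddSubgroup.mem_prod
  have hset : compL L M = ((K.map g : AddSubgroup (E1 × E3)) : Set (E1 × E3)) := by
    ext p
    simp only [compL, Set.mem_setOf_eq, SetLike.mem_coe, AddSubgroup.mem_map]
    constructor
    · rintro ⟨a2, hl', hm'⟩
      refine ⟨(p.1, a2, p.2), (hKmem _).mpr ⟨hl', hm'⟩, ?_⟩
      rw [hgdef]
      exact Prod.ext rfl rfl
    · rintro ⟨x, hx, rfl⟩
      exact ⟨x.2.1, ((hKmem _).mp hx).1, ((hKmem _).mp hx).2⟩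
  have hcompcard : Nat.card (compL L M) = Nat.card (K.map g) := by
    rw [hset]
    rfl
  have e1 : Nat.card K = Nat.card (K.map g) * Nat.card P := by
    have h := card_range_mul_card_ker (g.comp K.subtype)
    have hrange : (g.comp K.subtype).range = K.map g := by
      rw [AddMonoidHom.range_comp, AddSubgroup.range_subtype]
    have memP : ∀ b : E2, b ∈ P ↔ ((0 : E1), b) ∈ L ∧ (b, (0 : E3)) ∈ M := by
      intro b
      rw [hPdef, AddSubgroup.mem_inf, hL0iff, hM0iff]
    have hker : Nat.card (g.comp K.subtype).ker = Nat.card P := by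
      apply Nat.card_congr
      refine ⟨fun x => ⟨(x.1 : E1 × E2 × E3).2.1, ?_⟩,
        fun y => ⟨⟨((0 : E1), ((y : E2), (0 : E3))), ?_⟩, ?_⟩, ?_, ?_⟩
      · have hx2 : g (x.1 : E1 × E2 × E3) = 0 := x.2
        have ha : (x.1 : E1 × E2 × E3).1 = 0 := congrArg Prod.fst hx2
        have hb : (x.1 : E1 × E2 × E3).2.2 = 0 := congrArg Prod.snd hx2
        have hmem := (hKmem _).mp x.1.2
        rw [memP]
        exact ⟨ha ▸ hmem.1, hb ▸ hmem.2⟩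
      · have hy := (memP _).mp y.2
        exact (hKmem _).mpr ⟨hy.1, hy.2⟩
      · have : g ((0 : E1), ((y : E2), (0 : E3))) = 0 := rfl
        exact this
      · intro x
        apply Subtype.ext
        apply Subtype.ext
        have hx2 : g (x.1 : E1 × E2 × E3) = 0 := x.2
        have ha : (x.1 : E1 × E2 × E3).1 = 0 := congrArg Prod.fst hx2
        have hb : (x.1 : E1 × E2 × E3).2.2 = 0 := congrArg Prod.snd hx2
        exact Prod.ext ha.symm (Prod.ext rfl hb.symm)
      · intro y
        apply Subtype.ext
        rfl
    rw [h, hrange, hker]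
  have e2 : Nat.card L * Nat.card M = Nat.card Hh * Nat.card K := by
    set ψ : (E1 × E2) × (E2 × E3) →+ E2 :=
      AddMonoidHom.mk' (fun p => p.1.2 - p.2.1) (fun a b => add_sub_add_comm _ _ _ _)
      with hψdef
    set φ2 : ↥(L.prod M) →+ E2 := ψ.comp (L.prod M).subtype with hφ2def
    have h := card_range_mul_card_ker φ2
    have hprodcard : Nat.card (L.prod M) = Nat.card L * Nat.card M := by
      rw [Nat.card_congr (AddSubgroup.prodEquiv L M).toEquiv, Nat.card_prod]
    have hrange2 : φ2.range = Hh := by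
      ext x
      rw [AddMonoidHom.mem_range]
      constructor
      · rintro ⟨⟨p, hp⟩, rfl⟩
        have hp' := AddSubgroup.mem_prod.mp hp
        have hval : φ2 ⟨p, hp⟩ = p.1.2 - p.2.1 := rfl
        rw [hval, sub_eq_add_neg, hHdef]
        exact add_mem (AddSubgroup.mem_sup_left ⟨p.1, hp'.1, rfl⟩)
          (AddSubgroup.mem_sup_right (neg_mem ⟨p.2, hp'.2, rfl⟩))
      · intro hx
        obtain ⟨y, hy, z, hz, rfl⟩ := AddSubgroup.mem_sup.mp hx
        obtain ⟨l, hlL, rfl⟩ := AddSubgroup.mem_map.mp hy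
        obtain ⟨m, hmM, rfl⟩ := AddSubgroup.mem_map.mp hz
        refine ⟨⟨(l, -m), AddSubgroup.mem_prod.mpr ⟨hlL, neg_mem hmM⟩⟩, ?_⟩
        show l.2 - (-m).1 = _
        rw [Prod.fst_neg, sub_neg_eq_add]
        rfl
    have hker2 : Nat.card φ2.ker = Nat.card K := by
      apply Nat.card_congr
      refine ⟨fun x => ⟨((x.1 : (E1 × E2) × (E2 × E3)).1.1,
          ((x.1 : (E1 × E2) × (E2 × E3)).1.2, (x.1 : (E1 × E2) × (E2 × E3)).2.2)), ?_⟩,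
        fun y => ⟨⟨(((y : E1 × E2 × E3).1, (y : E1 × E2 × E3).2.1),
          ((y : E1 × E2 × E3).2.1, (y : E1 × E2 × E3).2.2)), ?_⟩, ?_⟩, ?_, ?_⟩
      · have hx2 : ψ (x.1 : (E1 × E2) × (E2 × E3)) = 0 := x.2
        have heq : (x.1 : (E1 × E2) × (E2 × E3)).1.2 = (x.1 : (E1 × E2) × (E2 × E3)).2.1 :=
          sub_eq_zero.mp hx2
        have hp' := AddSubgroup.mem_prod.mp x.1.2
        rw [hKmem]
        constructor
        · simpa using hp'.1
        · rw [heq]; simpa using hp'.2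
      · have hy := (hKmem _).mp y.2
        exact AddSubgroup.mem_prod.mpr ⟨hy.1, hy.2⟩
      · have : ψ (((y : E1 × E2 × E3).1, (y : E1 × E2 × E3).2.1),
            ((y : E1 × E2 × E3).2.1, (y : E1 × E2 × E3).2.2)) = 0 := sub_self _
        exact this
      · intro x
        apply Subtype.ext
        apply Subtype.ext
        have hx2 : ψ (x.1 : (E1 × E2) × (E2 × E3)) = 0 := x.2
        have heq : (x.1 : (E1 × E2) × (E2 × E3)).1.2 = (x.1 : (E1 × E2) × (E2 × E3)).2.1 :=
          sub_eq_zero.mp hx2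
        exact Prod.ext (Prod.ext rfl rfl) (Prod.ext heq rfl)
      · intro y
        apply Subtype.ext
        rfl
    rw [← hprodcard, h, hrange2, hker2]
  rw [hcompcard, ← e3, ← mul_assoc, ← e1, mul_comm (Nat.card M) (Nat.card L), e2, mul_comm]
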